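/- arXiv:1310.7677 — 2 statements merged into one kernel-verified Lean document; each statement's English description precedes it below -/
import Mathlib

section
/- If the CFL-type condition Δt/h^α ≤ 1/(2 ε C_α (1 + 1/α − ζ(α−1))) holds, then for every integer j with |j| < J (where h = 1/J), the diagonal coefficient of the explicit Euler absorbing scheme is nonnegative: 1 + 2Δt ε C_α ζ(α−1) h^{−α} − (Δt ε C_α/α)[(1+jh)^{−α} + (1−jh)^{−α}] − Δt ε C_α h Σ''_{k=−J−j, k≠0}^{J−j} 1/|kh|^{1+α} ≥ 0. -/
open scoped BigOperators

/-- The constant `C_α = α Γ((1+α)/2) / (2^{1-α} √π Γ(1-α/2))`. -/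
noncomputable def Cconst (α : ℝ) : ℝ :=
  α * Real.Gamma ((1 + α) / 2) /
    ((2 : ℝ) ^ (1 - α) * Real.sqrt Real.pi * Real.Gamma (1 - α / 2))

/-- The real value of the Riemann zeta function at a real argument. -/
noncomputable def zetaR (s : ℝ) : ℝ := (riemannZeta (s : ℂ)).re

/-- The double-primed sum `Σ''_{k=a, k≠0}^{b} g(k)`: the sum over integers `a ≤ k ≤ b`,
omitting `k = 0`, where the end terms `k = a` and `k = b` carry weight `1/2`. -/
noncomputable def dsum (a b : ℤ) (g : ℤ → ℝ) : ℝ :=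
  ∑ k ∈ (Finset.Icc a b).erase 0, (if k = a ∨ k = b then (1 : ℝ) / 2 else 1) * g k

lemma aux_slope {α x : ℝ} (hα : 0 < α) (hx : 1 ≤ x) :
    α * (x + 1) ^ (-(1 + α)) ≤ x ^ (-α) - (x + 1) ^ (-α) := by
  have hx0 : 0 < x := lt_of_lt_of_le one_pos hx
  obtain ⟨c, hc, hc'⟩ := exists_hasDerivAt_eq_slope (fun t => t ^ (-α))
    (fun t => (-α) * t ^ (-α - 1)) (by linarith : x < x + 1)
    (fun t ht => (Real.continuousAt_rpow_const t (-α)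
      (Or.inl (by have := ht.1; exact ne_of_gt (by linarith)))).continuousWithinAt)
    (fun t ht => Real.hasDerivAt_rpow_const
      (Or.inl (by have := ht.1; exact ne_of_gt (by linarith))))
  have hc0 : 0 < c := lt_trans hx0 hc.1
  have hcb : c ≤ x + 1 := le_of_lt hc.2
  have hmono : (x + 1) ^ (-α - 1) ≤ c ^ (-α - 1) :=
    Real.rpow_le_rpow_of_nonpos hc0 hcb (by linarith)
  have hexp : -(1 + α) = -α - 1 := by ring
  rw [hexp]
  have : (-α) * c ^ (-α - 1) = ((x + 1) ^ (-α) - x ^ (-α)) / (x + 1 - x) := hc'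
  simp only [add_sub_cancel_left, div_one] at this
  nlinarith [hmono, hα]

lemma aux_sum {α : ℝ} (hα : 0 < α) :
    ∀ N : ℤ, 1 ≤ N →
      ∑ k ∈ Finset.Icc (1 : ℤ) N, ((k : ℝ)) ^ (-(1 + α)) ≤
        1 + 1 / α - (N : ℝ) ^ (-α) / α := by
  intro N hN
  refine Int.le_induction (motive := fun N _ => ∑ k ∈ Finset.Icc (1 : ℤ) N, ((k : ℝ)) ^ (-(1 + α)) ≤
      1 + 1 / α - (N : ℝ) ^ (-α) / α) ?_ ?_ N hN
  · simp only [Finset.Icc_self, Finset.sum_singleton, Int.cast_one, Real.one_rpow]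
    norm_num
  · intro N hN1 ih
    have hins : Finset.Icc (1 : ℤ) (N + 1) = insert (N + 1) (Finset.Icc (1 : ℤ) N) := by
      ext k; simp only [Finset.mem_Icc, Finset.mem_insert]; omega
    have hnotmem : (N + 1) ∉ Finset.Icc (1 : ℤ) N := by
      simp only [Finset.mem_Icc]; omega
    simp only [hins, Finset.sum_insert hnotmem]
    have hcast : ((N + 1 : ℤ) : ℝ) = (N : ℝ) + 1 := by push_cast; ring
    have hx : (1 : ℝ) ≤ (N : ℝ) := by exact_mod_cast hN1
    have hslope := aux_slope hα hx
    have h2 : ((N + 1 : ℤ) : ℝ) ^ (-(1 + α)) ≤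
        (N : ℝ) ^ (-α) / α - ((N + 1 : ℤ) : ℝ) ^ (-α) / α := by
      rw [hcast, ← sub_div, le_div_iff₀ hα]
      nlinarith [hslope]
    linarith

lemma sum_Icc_neg_eq (a : ℤ) (f : ℤ → ℝ) :
    ∑ k ∈ Finset.Icc a (-1), f k = ∑ k ∈ Finset.Icc 1 (-a), f (-k) := by
  have himg : Finset.Icc a (-1) = (Finset.Icc (1 : ℤ) (-a)).image (fun k => -k) := by
    ext k
    simp only [Finset.mem_Icc, Finset.mem_image]
    constructor
    · intro hk; exact ⟨-k, by omega, by omega⟩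
    · rintro ⟨m, hm, rfl⟩; omega
  rw [himg, Finset.sum_image (by intro x _ y _ hxy; exact neg_inj.mp hxy)]

/-- Nonnegativity of the diagonal coefficient of the explicit Euler absorbing scheme
under the CFL-type condition. -/
theorem stmt_7 (α ε h Δt : ℝ) (J : ℤ)
    (hα : 0 < α) (hα2 : α < 2) (hε : 0 < ε) (hJ : 1 ≤ J)
    (hh : h = 1 / (J : ℝ)) (hΔt : 0 < Δt)
    (hCFL : Δt / h ^ α ≤ 1 / (2 * ε * Cconst α * (1 + 1 / α - zetaR (α - 1)))) :
    ∀ j : ℤ, |j| < J →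
      0 ≤ 1 + 2 * Δt * ε * Cconst α * zetaR (α - 1) * h ^ (-α)
          - Δt * ε * Cconst α / α *
              ((1 + (j : ℝ) * h) ^ (-α) + (1 - (j : ℝ) * h) ^ (-α))
          - Δt * ε * Cconst α * h *
              dsum (-J - j) (J - j) (fun k => 1 / |(k : ℝ) * h| ^ (1 + α)) := by
  intro j hj
  obtain ⟨hjl, hjr⟩ := abs_lt.mp hj
  have hJ0 : (0 : ℝ) < (J : ℝ) := by exact_mod_cast (by omega : (0 : ℤ) < J)
  have hh0 : 0 < h := by rw [hh]; positivity
  set C := Cconst α with hCdef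
  have hC : 0 < C := by
    rw [hCdef]
    unfold Cconst
    have h1 : 0 < Real.Gamma ((1 + α) / 2) := Real.Gamma_pos_of_pos (by linarith)
    have h2 : 0 < Real.Gamma (1 - α / 2) := Real.Gamma_pos_of_pos (by linarith)
    have h3 : 0 < (2 : ℝ) ^ (1 - α) := Real.rpow_pos_of_pos (by norm_num) _
    have h4 : 0 < Real.sqrt Real.pi := Real.sqrt_pos.mpr Real.pi_pos
    positivity
  set ζ := zetaR (α - 1) with hζdef
  set D := 1 + 1 / α - ζ with hDdef
  have hhα : 0 < h ^ α := Real.rpow_pos_of_pos hh0 α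
  have hden : 0 < 2 * ε * C * D := by
    by_contra hle
    push_neg at hle
    have h1 : 1 / (2 * ε * C * D) ≤ 0 := one_div_nonpos.mpr hle
    have h2 : 0 < Δt / h ^ α := div_pos hΔt hhα
    linarith
  have hX : 0 < h ^ (-α) := Real.rpow_pos_of_pos hh0 _
  have hXα : h ^ α * h ^ (-α) = 1 := by
    rw [← Real.rpow_add hh0]; simp
  have hkey : Δt * (2 * ε * C * D) * h ^ (-α) ≤ 1 := by
    have h1 : Δt * (2 * ε * C * D) ≤ 1 * h ^ α := (div_le_div_iff₀ hhα hden).mp hCFL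
    calc Δt * (2 * ε * C * D) * h ^ (-α) ≤ 1 * h ^ α * h ^ (-α) :=
          mul_le_mul_of_nonneg_right h1 hX.le
      _ = 1 := by rw [one_mul, hXα]
  -- rewrite the two middle terms
  have hJj1 : (0 : ℝ) ≤ ((J + j : ℤ) : ℝ) := by exact_mod_cast (by omega : (0 : ℤ) ≤ J + j)
  have hJj2 : (0 : ℝ) ≤ ((J - j : ℤ) : ℝ) := by exact_mod_cast (by omega : (0 : ℤ) ≤ J - j)
  have hP : (1 + (j : ℝ) * h) ^ (-α) = ((J + j : ℤ) : ℝ) ^ (-α) * h ^ (-α) := by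
    have e : (1 : ℝ) + (j : ℝ) * h = ((J + j : ℤ) : ℝ) * h := by
      rw [hh]; push_cast; field_simp
    rw [e, Real.mul_rpow hJj1 hh0.le]
  have hQ : (1 - (j : ℝ) * h) ^ (-α) = ((J - j : ℤ) : ℝ) ^ (-α) * h ^ (-α) := by
    have e : (1 : ℝ) - (j : ℝ) * h = ((J - j : ℤ) : ℝ) * h := by
      rw [hh]; push_cast; field_simp
    rw [e, Real.mul_rpow hJj2 hh0.le]
  set n₁ : ℝ := ((J + j : ℤ) : ℝ) ^ (-α) with hn₁
  set n₂ : ℝ := ((J - j : ℤ) : ℝ) ^ (-α) with hn₂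
  -- bound the double-primed sum
  set g : ℤ → ℝ := fun k => 1 / |(k : ℝ) * h| ^ (1 + α) with hgdef
  have hgpos : ∀ k : ℤ, 0 ≤ g k := by
    intro k
    rw [hgdef]
    positivity
  have hd1 : dsum (-J - j) (J - j) g ≤ ∑ k ∈ (Finset.Icc (-J - j) (J - j)).erase 0, g k := by
    unfold dsum
    apply Finset.sum_le_sum
    intro k _
    have := hgpos k
    split_ifs <;> linarith
  have hsplit : (Finset.Icc (-J - j) (J - j)).erase 0 =
      Finset.Icc (-J - j) (-1) ∪ Finset.Icc 1 (J - j) := by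
    ext k
    simp only [Finset.mem_erase, Finset.mem_Icc, Finset.mem_union]
    omega
  have hdisj : Disjoint (Finset.Icc (-J - j) (-1)) (Finset.Icc (1 : ℤ) (J - j)) := by
    rw [Finset.disjoint_left]
    intro k hk hk'
    simp only [Finset.mem_Icc] at hk hk'
    omega
  have hneg : ∑ k ∈ Finset.Icc (-J - j) (-1), g k = ∑ k ∈ Finset.Icc 1 (J + j), g k := by
    have := sum_Icc_neg_eq (-J - j) g
    rw [this, show -(-J - j) = J + j by ring]
    apply Finset.sum_congr rfl
    intro k _
    rw [hgdef]
    simp only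
    rw [show ((-k : ℤ) : ℝ) * h = -((k : ℝ) * h) by push_cast; ring, abs_neg]
  have hgval : ∀ N : ℤ, 1 ≤ N → ∑ k ∈ Finset.Icc (1 : ℤ) N, g k =
      (∑ k ∈ Finset.Icc (1 : ℤ) N, ((k : ℝ)) ^ (-(1 + α))) * h ^ (-(1 + α)) := by
    intro N hN
    rw [Finset.sum_mul]
    apply Finset.sum_congr rfl
    intro k hk
    simp only [Finset.mem_Icc] at hk
    have hk0 : (0 : ℝ) ≤ (k : ℝ) := by exact_mod_cast (by omega : (0 : ℤ) ≤ k)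
    rw [hgdef]
    simp only
    simp only [abs_of_nonneg (mul_nonneg hk0 hh0.le), Real.mul_rpow hk0 hh0.le,
      Real.rpow_neg hk0, Real.rpow_neg hh0.le, one_div, mul_inv]
  have hsum1 : ∑ k ∈ Finset.Icc (1 : ℤ) (J + j), g k ≤
      (1 + 1 / α - n₁ / α) * h ^ (-(1 + α)) := by
    rw [hgval (J + j) (by omega)]
    apply mul_le_mul_of_nonneg_right _ (Real.rpow_pos_of_pos hh0 _).le
    exact aux_sum hα (J + j) (by omega)
  have hsum2 : ∑ k ∈ Finset.Icc (1 : ℤ) (J - j), g k ≤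
      (1 + 1 / α - n₂ / α) * h ^ (-(1 + α)) := by
    rw [hgval (J - j) (by omega)]
    apply mul_le_mul_of_nonneg_right _ (Real.rpow_pos_of_pos hh0 _).le
    exact aux_sum hα (J - j) (by omega)
  have hdsum : dsum (-J - j) (J - j) g ≤
      (2 + 2 / α - n₁ / α - n₂ / α) * h ^ (-(1 + α)) := by
    calc dsum (-J - j) (J - j) g ≤ ∑ k ∈ (Finset.Icc (-J - j) (J - j)).erase 0, g k := hd1
      _ = ∑ k ∈ Finset.Icc (-J - j) (-1), g k + ∑ k ∈ Finset.Icc (1 : ℤ) (J - j), g k := by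
          rw [hsplit, Finset.sum_union hdisj]
      _ = ∑ k ∈ Finset.Icc (1 : ℤ) (J + j), g k + ∑ k ∈ Finset.Icc (1 : ℤ) (J - j), g k := by
          rw [hneg]
      _ ≤ (1 + 1 / α - n₁ / α) * h ^ (-(1 + α)) + (1 + 1 / α - n₂ / α) * h ^ (-(1 + α)) :=
          add_le_add hsum1 hsum2
      _ = (2 + 2 / α - n₁ / α - n₂ / α) * h ^ (-(1 + α)) := by ring
  have hpow : h * h ^ (-(1 + α)) = h ^ (-α) := by
    nth_rewrite 1 [← Real.rpow_one h]
    rw [← Real.rpow_add hh0]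
    congr 1
    ring
  have hch : 0 ≤ Δt * ε * C * h := by positivity
  have hmul : Δt * ε * C * h * dsum (-J - j) (J - j) g ≤
      Δt * ε * C * h * ((2 + 2 / α - n₁ / α - n₂ / α) * h ^ (-(1 + α))) :=
    mul_le_mul_of_nonneg_left hdsum hch
  have e2 : Δt * ε * C * h * ((2 + 2 / α - n₁ / α - n₂ / α) * h ^ (-(1 + α))) =
      Δt * ε * C * (2 + 2 / α) * h ^ (-α) - Δt * ε * C / α * (n₁ * h ^ (-α) + n₂ * h ^ (-α)) := by
    rw [show Δt * ε * C * h * ((2 + 2 / α - n₁ / α - n₂ / α) * h ^ (-(1 + α))) =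
        Δt * ε * C * (2 + 2 / α - n₁ / α - n₂ / α) * (h * h ^ (-(1 + α))) from by ring, hpow]
    ring
  have e3 : Δt * ε * C * (2 + 2 / α) * h ^ (-α) - 2 * Δt * ε * C * ζ * h ^ (-α) =
      Δt * (2 * ε * C * D) * h ^ (-α) := by
    rw [hDdef]
    ring
  rw [hP, hQ]
  clear_value C ζ D n₁ n₂ g
  linarith [hkey, hmul, e2, e3]
end

section
/- Under the CFL-type condition Δt/h^α ≤ 1/(2 ε C_α (1 + 1/α − ζ(α−1))), the explicit Euler scheme for the absorbing condition is stable in the maximum norm: for every n ≥ 0, sup_{j ∈ ℤ} |P^{n+1}_j| ≤ sup_{j ∈ ℤ} |P^n_j| (for any bounded initial grid function P^0 vanishing for |j| ≥ J). -/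
open scoped BigOperators

section Helpers
open Complex Filter Topology

lemma Cconst_pos_aux {α : ℝ} (hα : 0 < α) (hα2 : α < 2) :
    0 < α * Real.Gamma ((1 + α) / 2) /
      ((2 : ℝ) ^ (1 - α) * Real.sqrt Real.pi * Real.Gamma (1 - α / 2)) := by
  apply div_pos
  · exact mul_pos hα (Real.Gamma_pos_of_pos (by linarith))
  · have h1 : (0:ℝ) < (2:ℝ) ^ (1 - α) := Real.rpow_pos_of_pos (by norm_num) _
    have h2 : (0:ℝ) < Real.sqrt Real.pi := Real.sqrt_pos.mpr Real.pi_pos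
    have h3 : (0:ℝ) < Real.Gamma (1 - α / 2) := Real.Gamma_pos_of_pos (by linarith)
    positivity

lemma bern {α x : ℝ} (hα : 0 < α) (hα2 : α < 2) (hx : 1 ≤ x) :
    α * (x + 1) ^ (-(1 + α)) + (x + 1) ^ (-α) ≤ x ^ (-α) := by
  have hx0 : (0:ℝ) < x := by linarith
  have hx1 : (0:ℝ) < x + 1 := by linarith
  have key : (x + 1) ^ (-α) * (1 + α / (x + 1)) ≤ x ^ (-α) := by
    rcases le_or_gt 1 α with hge | hlt
    · -- α ≥ 1 : Bernoulli (1 + 1/x)^α ≥ 1 + α/x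
      have hb : 1 + α * (1 / x) ≤ (1 + 1 / x) ^ α :=
        one_add_mul_self_le_rpow_one_add (le_trans (by norm_num : (-1:ℝ) ≤ 0) (by positivity)) hge
      have h1x : (1 + 1 / x) = (x + 1) / x := by field_simp
      have hpow : ((x + 1) / x) ^ α = (x + 1) ^ α / x ^ α :=
        Real.div_rpow hx1.le hx0.le α
      have hxa : (0:ℝ) < x ^ α := Real.rpow_pos_of_pos hx0 _
      have hxa1 : (0:ℝ) < (x + 1) ^ α := Real.rpow_pos_of_pos hx1 _
      have h2 : 1 + α / (x + 1) ≤ (x + 1) ^ α / x ^ α := by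
        calc 1 + α / (x + 1) ≤ 1 + α * (1 / x) := by
              rw [mul_one_div]
              gcongr
              linarith
          _ ≤ (1 + 1 / x) ^ α := hb
          _ = (x + 1) ^ α / x ^ α := by rw [h1x, hpow]
      calc (x + 1) ^ (-α) * (1 + α / (x + 1)) ≤ (x + 1) ^ (-α) * ((x + 1) ^ α / x ^ α) := by
            have : (0:ℝ) ≤ (x + 1) ^ (-α) := (Real.rpow_pos_of_pos hx1 _).le
            exact mul_le_mul_of_nonneg_left h2 this
        _ = x ^ (-α) := by
            rw [Real.rpow_neg hx1.le, Real.rpow_neg hx0.le]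
            field_simp
    · -- α < 1
      have hu : α / (x + 1) < 1 := by
        rw [div_lt_one hx1]; linarith
      have hu0 : 0 < α / (x + 1) := by positivity
      have hb : (1 + (-(1 / (x + 1)))) ^ α ≤ 1 + α * (-(1 / (x + 1))) :=
        rpow_one_add_le_one_add_mul_self (by rw [neg_le, neg_neg, div_le_one hx1]; linarith)
          hα.le hlt.le
      have h1x : (1 + (-(1 / (x + 1)))) = x / (x + 1) := by field_simp; ring
      have hb' : (x / (x + 1)) ^ α ≤ 1 - α / (x + 1) := by
        rw [← h1x]
        calc (1 + (-(1 / (x + 1)))) ^ α ≤ 1 + α * (-(1 / (x + 1))) := hb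
          _ = 1 - α / (x + 1) := by rw [mul_neg, mul_one_div]; ring
      have hpow : (x / (x + 1)) ^ α = x ^ α / (x + 1) ^ α := Real.div_rpow hx0.le hx1.le α
      have hxa : (0:ℝ) < x ^ α := Real.rpow_pos_of_pos hx0 _
      have hxa1 : (0:ℝ) < (x + 1) ^ α := Real.rpow_pos_of_pos hx1 _
      -- x^α ≤ (x+1)^α (1 - α/(x+1))
      have h3 : x ^ α ≤ (x + 1) ^ α * (1 - α / (x + 1)) := by
        rw [hpow] at hb'
        calc x ^ α = (x + 1) ^ α * (x ^ α / (x + 1) ^ α) := by field_simp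
          _ ≤ (x + 1) ^ α * (1 - α / (x + 1)) := by
              exact mul_le_mul_of_nonneg_left hb' hxa1.le
      -- multiply: (1+u)(1-u) ≤ 1
      have h4 : x ^ α * (1 + α / (x + 1)) ≤ (x + 1) ^ α := by
        calc x ^ α * (1 + α / (x + 1)) ≤ (x + 1) ^ α * (1 - α / (x + 1)) * (1 + α / (x + 1)) := by
              exact mul_le_mul_of_nonneg_right h3 (by positivity)
          _ = (x + 1) ^ α * (1 - (α / (x + 1)) ^ 2) := by ring
          _ ≤ (x + 1) ^ α * 1 := by
              apply mul_le_mul_of_nonneg_left _ hxa1.le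
              nlinarith [sq_nonneg (α / (x + 1))]
          _ = (x + 1) ^ α := mul_one _
      rw [Real.rpow_neg hx1.le, Real.rpow_neg hx0.le, inv_mul_le_iff₀ hxa1]
      have heq : (x + 1) ^ α * (x ^ α)⁻¹ = (x + 1) ^ α / x ^ α := by ring
      rw [heq, le_div_iff₀ hxa, mul_comm]
      exact h4
  calc α * (x + 1) ^ (-(1 + α)) + (x + 1) ^ (-α)
      = (x + 1) ^ (-α) * (1 + α / (x + 1)) := by
        rw [show -(1 + α) = -α + (-1 : ℝ) by ring, Real.rpow_add hx1, Real.rpow_neg_one]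
        field_simp
        ring
    _ ≤ x ^ (-α) := key


lemma sum_bound {α : ℝ} (hα : 0 < α) (hα2 : α < 2) :
    ∀ N : ℤ, 1 ≤ N →
      α * (∑ k ∈ Finset.Icc (1:ℤ) N, ((k:ℝ)) ^ (-(1 + α))) + (N:ℝ) ^ (-α) ≤ α + 1 := by
  refine Int.le_induction
    (motive := fun N _ => α * (∑ k ∈ Finset.Icc (1:ℤ) N, ((k:ℝ)) ^ (-(1 + α))) + (N:ℝ) ^ (-α) ≤ α + 1)
    ?_ ?_
  · simp only [Finset.Icc_self, Finset.sum_singleton, Int.cast_one, Real.one_rpow]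
    norm_num
  · intro N hN ih
    have hins : Finset.Icc (1:ℤ) (N + 1) = insert (N + 1) (Finset.Icc (1:ℤ) N) := by
      ext k
      simp only [Finset.mem_Icc, Finset.mem_insert]
      omega
    have hnotmem : (N + 1) ∉ Finset.Icc (1:ℤ) N := by
      simp only [Finset.mem_Icc]; omega
    rw [hins, Finset.sum_insert hnotmem]
    have hcast : ((N + 1 : ℤ) : ℝ) = (N : ℝ) + 1 := by push_cast; ring
    rw [hcast]
    have hb := bern hα hα2 (by exact_mod_cast hN : (1:ℝ) ≤ (N:ℝ))
    calc α * (((N:ℝ) + 1) ^ (-(1 + α)) + ∑ k ∈ Finset.Icc (1:ℤ) N, ((k:ℝ)) ^ (-(1 + α)))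
          + ((N:ℝ) + 1) ^ (-α)
        = (α * (∑ k ∈ Finset.Icc (1:ℤ) N, ((k:ℝ)) ^ (-(1 + α))))
          + (α * ((N:ℝ) + 1) ^ (-(1 + α)) + ((N:ℝ) + 1) ^ (-α)) := by ring
      _ ≤ (α * (∑ k ∈ Finset.Icc (1:ℤ) N, ((k:ℝ)) ^ (-(1 + α)))) + (N:ℝ) ^ (-α) := by
          linarith [hb]
      _ ≤ α + 1 := ih


noncomputable def cterm (s : ℂ) (n : ℕ) : ℂ :=
  (n:ℂ) ^ (-s) - (((n:ℂ) + 1) ^ (1 - s) - (n:ℂ) ^ (1 - s)) / (1 - s)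

lemma cterm_norm_le {s : ℂ} {δ : ℝ} (hs1 : s ≠ 1) (hδ : 0 < δ) (hδs : δ ≤ s.re)
    {n : ℕ} (hn : 1 ≤ n) : ‖cterm s n‖ ≤ ‖s‖ * (n:ℝ) ^ (-δ - 1) := by
  have hn0 : (0:ℝ) < (n:ℝ) := by exact_mod_cast hn
  have hn1 : (1:ℝ) ≤ (n:ℝ) := by exact_mod_cast hn
  have hs0 : s ≠ 0 := by
    intro h; rw [h] at hδs; simp at hδs; linarith
  set T : Set ℝ := Set.Icc (n:ℝ) ((n:ℝ) + 1) with hT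
  have hmemn : (n:ℝ) ∈ T := by constructor <;> simp
  have hmemn1 : ((n:ℝ) + 1) ∈ T := by constructor <;> simp
  have hxpos : ∀ x ∈ T, (0:ℝ) < x := fun x hx => lt_of_lt_of_le hn0 hx.1
  -- derivative of y ↦ y^(-s):  (-s) * x^(-s-1)
  have hK : ∀ x ∈ T, HasDerivAt (fun y : ℝ => (y:ℂ) ^ (-s)) (-s * (x:ℂ) ^ (-s - 1)) x := by
    intro x hx
    have hr : (-s - 1 : ℂ) ≠ -1 := by
      intro h
      apply hs0
      have : -s = 0 := by linear_combination h
      linear_combination -this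
    have hd := hasDerivAt_ofReal_cpow_const' (ne_of_gt (hxpos x hx)) hr
    have h1 : (-s - 1 + 1 : ℂ) = -s := by ring
    rw [h1] at hd
    have hd2 := hd.const_mul (-s : ℂ)
    have hfun : (fun y : ℝ => (-s) * ((y:ℂ) ^ (-s) / (-s))) = fun y : ℝ => (y:ℂ) ^ (-s) := by
      funext y
      field_simp
    rw [hfun] at hd2
    exact hd2
  -- bound on that derivative
  have hKb : ∀ x ∈ T, ‖-s * (x:ℂ) ^ (-s - 1)‖ ≤ ‖s‖ * (n:ℝ) ^ (-δ - 1) := by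
    intro x hx
    rw [norm_mul, norm_neg]
    apply mul_le_mul_of_nonneg_left _ (norm_nonneg s)
    rw [Complex.norm_cpow_eq_rpow_re_of_pos (hxpos x hx)]
    have hre : (-s - 1).re = -s.re - 1 := by simp
    rw [hre]
    calc x ^ (-s.re - 1) ≤ x ^ (-δ - 1) := by
          apply Real.rpow_le_rpow_of_exponent_le (le_trans hn1 hx.1)
          linarith
      _ ≤ (n:ℝ) ^ (-δ - 1) := by
          apply Real.rpow_le_rpow_of_nonpos hn0 hx.1
          linarith
  -- inner MVT
  have hKest : ∀ x ∈ T, ‖(x:ℂ) ^ (-s) - (n:ℂ) ^ (-s)‖ ≤ (‖s‖ * (n:ℝ) ^ (-δ - 1)) * ‖x - (n:ℝ)‖ := by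
    intro x hx
    exact Convex.norm_image_sub_le_of_norm_hasDerivWithin_le
      (fun y hy => ((hK y hy).hasDerivWithinAt)) hKb (convex_Icc _ _) hmemn hx
  -- outer function G
  set G : ℝ → ℂ := fun y => (y:ℂ) ^ (1 - s) / (1 - s) - (y:ℂ) * (n:ℂ) ^ (-s) with hG
  have hGd : ∀ x ∈ T, HasDerivAt G ((x:ℂ) ^ (-s) - (n:ℂ) ^ (-s)) x := by
    intro x hx
    have hr : (-s : ℂ) ≠ -1 := by
      intro h
      apply hs1
      linear_combination -h
    have hd := hasDerivAt_ofReal_cpow_const' (ne_of_gt (hxpos x hx)) hr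
    have h1 : (-s + 1 : ℂ) = 1 - s := by ring
    rw [h1] at hd
    have hlin : HasDerivAt (fun y : ℝ => (y:ℂ) * (n:ℂ) ^ (-s)) ((n:ℂ) ^ (-s)) x := by
      simpa using ((hasDerivAt_id (x:ℂ)).comp_ofReal).mul_const ((n:ℂ) ^ (-s))
    exact hd.sub hlin
  have hGest : ‖G ((n:ℝ) + 1) - G (n:ℝ)‖ ≤ (‖s‖ * (n:ℝ) ^ (-δ - 1)) * ‖((n:ℝ) + 1) - (n:ℝ)‖ :=
    Convex.norm_image_sub_le_of_norm_hasDerivWithin_le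
    (fun y hy => ((hGd y hy).hasDerivWithinAt))
    (fun y hy => hKest y hy |>.trans (by
      rw [Real.norm_eq_abs, _root_.abs_of_nonneg (by linarith [hy.1] : (0:ℝ) ≤ y - (n:ℝ))]
      have h2 : y - (n:ℝ) ≤ 1 := by linarith [hy.2]
      nlinarith [norm_nonneg s, Real.rpow_pos_of_pos hn0 (-δ - 1), mul_le_mul_of_nonneg_left h2
        (mul_nonneg (norm_nonneg s) (Real.rpow_pos_of_pos hn0 (-δ - 1)).le)]))
    (convex_Icc _ _) hmemn hmemn1
  have hGval : G ((n:ℝ) + 1) - G (n:ℝ) = -(cterm s n) := by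
    rw [hG]
    simp only [cterm]
    push_cast
    have h1s : (1 - s : ℂ) ≠ 0 := by
      intro h
      apply hs1
      linear_combination -h
    field_simp
    ring
  have hnorm1 : ‖((n:ℝ) + 1 : ℝ) - (n:ℝ)‖ = 1 := by simp
  rw [hGval, norm_neg] at hGest
  rw [hnorm1, mul_one] at hGest
  exact hGest


noncomputable def zetaAux (s : ℂ) : ℂ := 1 / (s - 1) + ∑' n : ℕ, cterm s (n + 1)

lemma summ_aux {δ : ℝ} (hδ : 0 < δ) : Summable (fun n : ℕ => ((n:ℝ) + 1) ^ (-δ - 1)) := by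
  have h1 : Summable (fun n : ℕ => (n:ℝ) ^ (-δ - 1)) :=
    Real.summable_nat_rpow.mpr (by linarith)
  have h2 := (summable_nat_add_iff 1).mpr h1
  apply h2.congr
  intro n
  push_cast
  ring_nf

lemma cterm_summable {s : ℂ} {δ : ℝ} (hs1 : s ≠ 1) (hδ : 0 < δ) (hδs : δ ≤ s.re) :
    Summable (fun n : ℕ => cterm s (n + 1)) := by
  apply Summable.of_norm
  apply Summable.of_nonneg_of_le (fun n => norm_nonneg _)
    (fun n => (cterm_norm_le hs1 hδ hδs (Nat.le_add_left 1 n)))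
  apply Summable.congr ((summ_aux hδ).mul_left ‖s‖)
  intro n
  push_cast
  ring_nf

lemma cterm_diffAt {n : ℕ} {z : ℂ} (hz : z ≠ 1) :
    DifferentiableAt ℂ (fun s => cterm s (n + 1)) z := by
  have hne : ((n : ℂ) + 1) ≠ 0 := by
    have := Nat.cast_add_one_ne_zero (R := ℂ) n
    exact_mod_cast this
  have hne2 : ((n : ℂ) + 1 + 1) ≠ 0 := by
    have := Nat.cast_add_one_ne_zero (R := ℂ) (n + 1)
    push_cast at this
    exact_mod_cast this
  have h1s : (fun s : ℂ => (1:ℂ) - s) = fun s : ℂ => 1 - s := rfl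
  have hd1 : DifferentiableAt ℂ (fun s : ℂ => ((n:ℂ) + 1) ^ (-s)) z :=
    (differentiable_neg.differentiableAt).const_cpow (Or.inl hne)
  have hd2 : DifferentiableAt ℂ (fun s : ℂ => ((n:ℂ) + 1 + 1) ^ (1 - s)) z :=
    ((differentiable_const (1:ℂ)).sub differentiable_id).differentiableAt.const_cpow (Or.inl hne2)
  have hd3 : DifferentiableAt ℂ (fun s : ℂ => ((n:ℂ) + 1) ^ (1 - s)) z :=
    ((differentiable_const (1:ℂ)).sub differentiable_id).differentiableAt.const_cpow (Or.inl hne)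
  have hden : (1 : ℂ) - z ≠ 0 := by
    intro h
    apply hz
    linear_combination -h
  have : DifferentiableAt ℂ
      (fun s : ℂ => ((n:ℂ) + 1) ^ (-s)
        - (((n:ℂ) + 1 + 1) ^ (1 - s) - ((n:ℂ) + 1) ^ (1 - s)) / (1 - s)) z :=
    hd1.sub ((hd2.sub hd3).div ((differentiable_const (1:ℂ)).sub differentiable_id).differentiableAt hden)
  apply this.congr_of_eventuallyEq
  filter_upwards with s
  simp only [cterm]
  push_cast
  ring_nf

lemma zetaAux_diffAt {z : ℂ} (hz0 : 0 < z.re) (hz1 : z ≠ 1) :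
    DifferentiableAt ℂ zetaAux z := by
  set δ : ℝ := z.re / 2 with hδdef
  have hδ : 0 < δ := by positivity
  have hd1 : 0 < dist z 1 := dist_pos.mpr hz1
  set r : ℝ := min δ (dist z 1) with hrdef
  have hr : 0 < r := lt_min hδ hd1
  set U : Set ℂ := Metric.ball z r with hU
  have hUopen : IsOpen U := Metric.isOpen_ball
  have hUz : z ∈ U := Metric.mem_ball_self hr
  have hUprop : ∀ w ∈ U, δ ≤ w.re ∧ w ≠ 1 ∧ ‖w‖ ≤ ‖z‖ + r := by
    intro w hw
    have hwz : ‖w - z‖ < r := by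
      rw [← dist_eq_norm]; exact hw
    have hre : |w.re - z.re| ≤ ‖w - z‖ := by
      have := Complex.abs_re_le_norm (w - z)
      simpa using this
    have habs : |w.re - z.re| < δ :=
      lt_of_le_of_lt hre (lt_of_lt_of_le hwz (min_le_left _ _))
    obtain ⟨ha1, ha2⟩ := abs_lt.mp habs
    refine ⟨by simp only [hδdef] at *; linarith, ?_, ?_⟩
    · intro h
      rw [h] at hwz
      have : dist z 1 ≤ ‖(1:ℂ) - z‖ := by rw [dist_eq_norm]; simp [norm_sub_rev]
      have hrle : r ≤ dist z 1 := min_le_right _ _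
      rw [norm_sub_rev] at hwz
      have : dist z 1 < r := by
        rw [dist_eq_norm]
        simpa [norm_sub_rev] using hwz
      linarith
    · have : ‖w‖ ≤ ‖z‖ + ‖w - z‖ := by
        calc ‖w‖ = ‖z + (w - z)‖ := by ring_nf
          _ ≤ ‖z‖ + ‖w - z‖ := norm_add_le _ _
      linarith
  have hdiff : DifferentiableOn ℂ (fun w : ℂ => ∑' n : ℕ, cterm w (n + 1)) U := by
    apply differentiableOn_tsum_of_summable_norm
      (u := fun n : ℕ => (‖z‖ + r) * ((n:ℝ) + 1) ^ (-δ - 1))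
      ((summ_aux hδ).mul_left _)
      (fun n => fun w hw => (cterm_diffAt (hUprop w hw).2.1).differentiableWithinAt)
      hUopen
    intro n w hw
    obtain ⟨h1, h2, h3⟩ := hUprop w hw
    calc ‖cterm w (n + 1)‖ ≤ ‖w‖ * ((n + 1 : ℕ):ℝ) ^ (-δ - 1) :=
          cterm_norm_le h2 hδ h1 (Nat.le_add_left 1 n)
      _ ≤ (‖z‖ + r) * ((n:ℝ) + 1) ^ (-δ - 1) := by
          push_cast
          exact mul_le_mul_of_nonneg_right h3 (Real.rpow_nonneg (by positivity) _)
  have hd2 : DifferentiableAt ℂ (fun w : ℂ => ∑' n : ℕ, cterm w (n + 1)) z :=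
    (hdiff.differentiableAt (hUopen.mem_nhds hUz))
  have hd3 : DifferentiableAt ℂ (fun w : ℂ => 1 / (w - 1)) z := by
    have hzn : z - 1 ≠ 0 := sub_ne_zero.mpr hz1
    exact (differentiable_const (1:ℂ)).differentiableAt.div
      (differentiable_id.sub (differentiable_const 1)).differentiableAt hzn
  exact hd3.add hd2

lemma cterm_partial (s : ℂ) (N : ℕ) :
    ∑ n ∈ Finset.range N, cterm s (n + 1) =
      (∑ n ∈ Finset.range N, ((n:ℂ) + 1) ^ (-s)) - (((N:ℂ) + 1) ^ (1 - s) - 1) / (1 - s) := by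
  induction N with
  | zero => simp
  | succ N ih =>
      rw [Finset.sum_range_succ, Finset.sum_range_succ, ih]
      simp only [cterm]
      push_cast
      ring

lemma zetaAux_eq {s : ℂ} (hs : 1 < s.re) : zetaAux s = riemannZeta s := by
  have hs1 : s ≠ 1 := by
    intro h; rw [h] at hs; simp at hs
  have hsum := cterm_summable hs1 one_pos hs.le
  have hps := hsum.hasSum.tendsto_sum_nat
  -- zeta side summable
  have hzsum : Summable (fun n : ℕ => ((n:ℂ) + 1) ^ (-s)) := by
    apply Summable.of_norm
    have hbase : ∀ n : ℕ, ‖((n:ℂ) + 1) ^ (-s)‖ = ((n:ℝ) + 1) ^ (-s.re) := by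
      intro n
      have hcast : ((n:ℂ) + 1) = (((n:ℝ) + 1 : ℝ) : ℂ) := by push_cast; ring
      rw [hcast, Complex.norm_cpow_eq_rpow_re_of_pos (by positivity)]
      simp
    apply Summable.congr _ (fun n => (hbase n).symm)
    have h1 : Summable (fun n : ℕ => (n:ℝ) ^ (-s.re)) :=
      Real.summable_nat_rpow.mpr (by linarith)
    apply ((summable_nat_add_iff 1).mpr h1).congr
    intro n
    push_cast
    ring_nf
  have htsumz : riemannZeta s = ∑' n : ℕ, ((n:ℂ) + 1) ^ (-s) := by
    rw [zeta_eq_tsum_one_div_nat_add_one_cpow hs]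
    exact tsum_congr fun n => by rw [cpow_neg, one_div]
  have h2 : Tendsto (fun N => ∑ n ∈ Finset.range N, ((n:ℂ) + 1) ^ (-s)) atTop
      (𝓝 (riemannZeta s)) := by
    rw [htsumz]
    exact hzsum.hasSum.tendsto_sum_nat
  have h3 : Tendsto (fun N : ℕ => ((N:ℂ) + 1) ^ (1 - s)) atTop (𝓝 0) := by
    rw [tendsto_zero_iff_norm_tendsto_zero]
    have hnorm : ∀ N : ℕ, ‖((N:ℂ) + 1) ^ (1 - s)‖ = ((N:ℝ) + 1) ^ (1 - s.re) := by
      intro N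
      have hcast : ((N:ℂ) + 1) = (((N:ℝ) + 1 : ℝ) : ℂ) := by push_cast; ring
      rw [hcast, Complex.norm_cpow_eq_rpow_re_of_pos (by positivity)]
      simp
    simp only [hnorm]
    have hlim : Tendsto (fun x : ℝ => x ^ (-(s.re - 1))) atTop (𝓝 0) :=
      tendsto_rpow_neg_atTop (by linarith)
    have hcomp : Tendsto (fun N : ℕ => (N:ℝ) + 1) atTop atTop :=
      tendsto_atTop_add_const_right atTop 1 tendsto_natCast_atTop_atTop
    have := hlim.comp hcomp
    simpa [Function.comp_def, show -(s.re - 1) = 1 - s.re by ring] using this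
  have h4 : Tendsto (fun N : ℕ => (((N:ℂ) + 1) ^ (1 - s) - 1) / (1 - s)) atTop
      (𝓝 ((0 - 1) / (1 - s))) := (h3.sub_const 1).div_const _
  have h5 : Tendsto (fun N => ∑ n ∈ Finset.range N, cterm s (n + 1)) atTop
      (𝓝 (riemannZeta s - (0 - 1) / (1 - s))) := by
    have := h2.sub h4
    apply this.congr
    intro N
    rw [← cterm_partial]
  have h6 : (∑' n : ℕ, cterm s (n + 1)) = riemannZeta s - (0 - 1) / (1 - s) :=
    tendsto_nhds_unique hps h5
  rw [zetaAux, h6]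
  have h1s : (1:ℂ) - s ≠ 0 := by
    intro h; apply hs1; linear_combination -h
  have hs1' : s - 1 ≠ 0 := sub_ne_zero.mpr hs1
  field_simp
  ring


noncomputable def ctermR (t : ℝ) (n : ℕ) : ℝ :=
  (n:ℝ) ^ (-t) - (((n:ℝ) + 1) ^ (1 - t) - (n:ℝ) ^ (1 - t)) / (1 - t)

-- Bernoulli-based bounds on the increment of x ↦ x^(1-t)
lemma incr_bounds {t : ℝ} (ht0 : 0 < t) (ht1 : t < 1) {x : ℝ} (hx : 1 ≤ x) :
    (1 - t) * (x + 1) ^ (-t) ≤ (x + 1) ^ (1 - t) - x ^ (1 - t) ∧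
    (x + 1) ^ (1 - t) - x ^ (1 - t) ≤ (1 - t) * x ^ (-t) := by
  have hx0 : (0:ℝ) < x := by linarith
  have hx1 : (0:ℝ) < x + 1 := by linarith
  set p : ℝ := 1 - t with hp
  have hp0 : 0 ≤ p := by simp [hp]; linarith
  have hp1 : p ≤ 1 := by simp [hp]; linarith
  constructor
  · -- lower:  x^p ≤ (x+1)^p - p (x+1)^(p-1)
    have hb : (1 + (-(1/(x+1)))) ^ p ≤ 1 + p * (-(1/(x+1))) :=
      rpow_one_add_le_one_add_mul_self (by rw [neg_le, neg_neg, div_le_one hx1]; linarith)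
        hp0 hp1
    have he : (1 + (-(1/(x+1)))) = x / (x + 1) := by field_simp; ring
    rw [he] at hb
    have hmul := mul_le_mul_of_nonneg_right hb (Real.rpow_pos_of_pos hx1 p).le
    have hL : (x / (x+1)) ^ p * (x+1) ^ p = x ^ p := by
      rw [← Real.mul_rpow (by positivity) hx1.le]
      congr 1
      field_simp
    rw [hL] at hmul
    have hR : (1 + p * (-(1/(x+1)))) * (x+1) ^ p = (x+1) ^ p - p * (x+1) ^ (p - 1) := by
      rw [Real.rpow_sub hx1 p 1, Real.rpow_one]
      field_simp
      ring
    rw [hR] at hmul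
    have hpm : p - 1 = -t := by simp [hp]
    rw [hpm] at hmul
    -- hmul : x^p ≤ (x+1)^p - p*(x+1)^(-t)
    simp only [hp] at hmul ⊢
    linarith
  · -- upper: (x+1)^p ≤ x^p + p x^(p-1)
    have hb : (1 + 1/x) ^ p ≤ 1 + p * (1/x) :=
      rpow_one_add_le_one_add_mul_self (le_trans (by norm_num : (-1:ℝ) ≤ 0) (by positivity)) hp0 hp1
    have he : (1 + 1/x) = (x+1)/x := by field_simp
    rw [he] at hb
    have hmul := mul_le_mul_of_nonneg_right hb (Real.rpow_pos_of_pos hx0 p).le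
    have hL : ((x+1)/x) ^ p * x ^ p = (x+1) ^ p := by
      rw [← Real.mul_rpow (by positivity) hx0.le]
      congr 1
      field_simp
    rw [hL] at hmul
    have hR : (1 + p * (1/x)) * x ^ p = x ^ p + p * x ^ (p - 1) := by
      rw [Real.rpow_sub hx0 p 1, Real.rpow_one]
      field_simp
    rw [hR] at hmul
    have hpm : p - 1 = -t := by simp [hp]
    rw [hpm] at hmul
    simp only [hp] at hmul ⊢
    linarith

lemma ctermR_nonneg {t : ℝ} (ht0 : 0 < t) (ht1 : t < 1) {n : ℕ} (hn : 1 ≤ n) :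
    0 ≤ ctermR t n := by
  have hx : (1:ℝ) ≤ (n:ℝ) := by exact_mod_cast hn
  obtain ⟨_, hup⟩ := incr_bounds ht0 ht1 hx
  have h1t : (0:ℝ) < 1 - t := by linarith
  rw [ctermR]
  rw [sub_nonneg, div_le_iff₀ h1t]
  calc ((n:ℝ) + 1) ^ (1 - t) - (n:ℝ) ^ (1 - t) ≤ (1 - t) * (n:ℝ) ^ (-t) := hup
    _ = (n:ℝ) ^ (-t) * (1 - t) := by ring

lemma ctermR_le {t : ℝ} (ht0 : 0 < t) (ht1 : t < 1) {n : ℕ} (hn : 1 ≤ n) :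
    ctermR t n ≤ (n:ℝ) ^ (-t) - ((n:ℝ) + 1) ^ (-t) := by
  have hx : (1:ℝ) ≤ (n:ℝ) := by exact_mod_cast hn
  obtain ⟨hlow, _⟩ := incr_bounds ht0 ht1 hx
  have h1t : (0:ℝ) < 1 - t := by linarith
  rw [ctermR]
  have : ((n:ℝ) + 1) ^ (-t) ≤ (((n:ℝ) + 1) ^ (1 - t) - (n:ℝ) ^ (1 - t)) / (1 - t) := by
    rw [le_div_iff₀ h1t]
    calc ((n:ℝ) + 1) ^ (-t) * (1 - t) = (1 - t) * ((n:ℝ) + 1) ^ (-t) := by ring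
      _ ≤ _ := hlow
  linarith

lemma ctermR_tsum_le {t : ℝ} (ht0 : 0 < t) (ht1 : t < 1) :
    (∑' n : ℕ, ctermR t (n + 1)) ≤ 1 ∧ Summable (fun n : ℕ => ctermR t (n + 1)) := by
  have hnn : ∀ n : ℕ, 0 ≤ ctermR t (n + 1) :=
    fun n => ctermR_nonneg ht0 ht1 (Nat.le_add_left 1 n)
  have hpart : ∀ N : ℕ, ∑ n ∈ Finset.range N, ctermR t (n + 1) ≤ 1 := by
    intro N
    set F : ℕ → ℝ := fun n => ((n:ℝ) + 1) ^ (-t) with hF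
    have hle : ∀ n ∈ Finset.range N, ctermR t (n + 1) ≤ F n - F (n + 1) := by
      intro n _
      have := ctermR_le ht0 ht1 (Nat.le_add_left 1 n)
      simp only [hF]
      push_cast at this ⊢
      linarith
    calc ∑ n ∈ Finset.range N, ctermR t (n + 1) ≤ ∑ n ∈ Finset.range N, (F n - F (n + 1)) :=
          Finset.sum_le_sum hle
      _ = F 0 - F N := Finset.sum_range_sub' F N
      _ ≤ F 0 := by
          have : 0 ≤ F N := Real.rpow_nonneg (by positivity) _
          linarith
      _ = 1 := by simp [hF]
  exact ⟨Real.tsum_le_of_sum_range_le hnn hpart, summable_of_sum_range_le hnn hpart⟩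

lemma cterm_real {t : ℝ} (ht0 : 0 < t) (n : ℕ) :
    cterm (t:ℂ) n = ((ctermR t n : ℝ) : ℂ) := by
  have h1 : ((n:ℝ) : ℂ) ^ ((-t : ℝ) : ℂ) = (((n:ℝ) ^ (-t) : ℝ) : ℂ) :=
    (Complex.ofReal_cpow (by positivity) _).symm
  have h2 : (((n:ℝ) + 1 : ℝ) : ℂ) ^ ((1 - t : ℝ) : ℂ) = ((((n:ℝ) + 1) ^ (1 - t) : ℝ) : ℂ) :=
    (Complex.ofReal_cpow (by positivity) _).symm
  have h3 : ((n:ℝ) : ℂ) ^ ((1 - t : ℝ) : ℂ) = (((n:ℝ) ^ (1 - t) : ℝ) : ℂ) :=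
    (Complex.ofReal_cpow (by positivity) _).symm
  rw [cterm, ctermR]
  push_cast at h1 h2 h3 ⊢
  rw [h1, h2, h3]

lemma zetaAux_re_nonpos {t : ℝ} (ht0 : 0 < t) (ht1 : t < 1) : (zetaAux (t:ℂ)).re ≤ 0 := by
  obtain ⟨hts, hsummR⟩ := ctermR_tsum_le ht0 ht1
  have hts' : (∑' n : ℕ, cterm (t:ℂ) (n + 1)) = (((∑' n : ℕ, ctermR t (n + 1)) : ℝ) : ℂ) := by
    rw [Complex.ofReal_tsum]
    exact tsum_congr fun n => by rw [cterm_real ht0]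
  have hval : zetaAux (t:ℂ) = (((1 / (t - 1) + ∑' n : ℕ, ctermR t (n + 1)) : ℝ) : ℂ) := by
    rw [zetaAux, hts']
    push_cast
    ring
  rw [hval, Complex.ofReal_re]
  have h1 : 1 / (t - 1) = -(1 / (1 - t)) := by
    have ht1' : (1:ℝ) - t ≠ 0 := by linarith
    have ht2' : t - 1 ≠ 0 := by intro h; apply ht1'; linarith
    field_simp
    ring
  have h2 : (1:ℝ) ≤ 1 / (1 - t) := by
    rw [le_div_iff₀ (by linarith)]
    linarith
  linarith

lemma zeta_real_repr {u : ℝ} (hu : 1 < u) :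
    riemannZeta (u:ℂ) = ((∑' n : ℕ, ((n:ℝ) + 1) ^ (-u) : ℝ) : ℂ) := by
  have hre : 1 < (u:ℂ).re := by simpa using hu
  rw [zeta_eq_tsum_one_div_nat_add_one_cpow hre, Complex.ofReal_tsum]
  refine tsum_congr fun n => ?_
  have h1 : ((((n:ℝ) + 1) ^ (-u) : ℝ) : ℂ) = (((n:ℝ) + 1 : ℝ) : ℂ) ^ ((-u : ℝ) : ℂ) :=
    Complex.ofReal_cpow (by positivity) _
  rw [h1]
  push_cast
  rw [cpow_neg, one_div]

lemma zeta_re_nonpos {s : ℝ} (h1 : -1 < s) (h2 : s < 1) : (riemannZeta (s:ℂ)).re ≤ 0 := by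
  rcases lt_trichotomy s 0 with hneg | hzero | hpos
  · -- functional equation
    set u : ℝ := 1 - s with hu
    have hu1 : 1 < u := by simp [hu]; linarith
    have hu2 : u < 2 := by simp [hu]; linarith
    have hfe := riemannZeta_one_sub (s := (u:ℂ))
      (fun n => by
        intro h
        have : (u:ℝ) = -(n:ℝ) := by exact_mod_cast h
        have : (0:ℝ) < u := by linarith
        have hn : (0:ℝ) ≤ (n:ℝ) := by positivity
        linarith)
      (by
        intro h
        have : (u:ℝ) = 1 := by exact_mod_cast h
        linarith)
    have hs_eq : (1:ℂ) - (u:ℂ) = (s:ℂ) := by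
      push_cast [hu]
      ring
    rw [hs_eq] at hfe
    set Z : ℝ := ∑' n : ℕ, ((n:ℝ) + 1) ^ (-u) with hZ
    have hZnn : 0 ≤ Z := tsum_nonneg fun n => Real.rpow_nonneg (by positivity) _
    have hzu : riemannZeta (u:ℂ) = (Z : ℂ) := zeta_real_repr hu1
    have hA : (2 * (Real.pi : ℂ)) ^ (-(u:ℂ)) = (((2 * Real.pi) ^ (-u) : ℝ) : ℂ) := by
      have := Complex.ofReal_cpow (by positivity : (0:ℝ) ≤ 2 * Real.pi) (-u)
      rw [this]
      push_cast
      ring_nf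
    have hG : Complex.Gamma (u:ℂ) = ((Real.Gamma u : ℝ) : ℂ) := Complex.Gamma_ofReal u
    have hcos : Complex.cos ((Real.pi : ℂ) * (u:ℂ) / 2) = ((Real.cos (Real.pi * u / 2) : ℝ) : ℂ) := by
      rw [Complex.ofReal_cos]
      push_cast
      ring_nf
    rw [hzu, hA, hG, hcos] at hfe
    have hre : riemannZeta (s:ℂ)
        = ((2 * (2 * Real.pi) ^ (-u) * Real.Gamma u * Real.cos (Real.pi * u / 2) * Z : ℝ) : ℂ) := by
      rw [hfe]
      push_cast
      ring
    rw [hre, Complex.ofReal_re]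
    have hcosn : Real.cos (Real.pi * u / 2) ≤ 0 := by
      apply Real.cos_nonpos_of_pi_div_two_le_of_le
      · rw [div_le_div_iff₀ (by norm_num) (by norm_num : (0:ℝ) < 2)] at *
        nlinarith [Real.pi_pos]
      · nlinarith [Real.pi_pos]
    have hApos : (0:ℝ) < (2 * Real.pi) ^ (-u) := Real.rpow_pos_of_pos (by positivity) _
    have hGpos : (0:ℝ) < Real.Gamma u := Real.Gamma_pos_of_pos (by linarith)
    have : 2 * (2 * Real.pi) ^ (-u) * Real.Gamma u * Real.cos (Real.pi * u / 2) ≤ 0 := by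
      apply mul_nonpos_of_nonneg_of_nonpos _ hcosn
      positivity
    exact mul_nonpos_of_nonpos_of_nonneg this hZnn
  · rw [hzero]
    push_cast
    rw [riemannZeta_zero]
    norm_num
  · -- analytic continuation
    set A : Set ℂ := {z : ℂ | 0 < z.re} ∩ {z : ℂ | z.re < 1} with hAdef
    set C : Set ℂ := Metric.ball (1 + Complex.I) (3/4) with hCdef
    set B : Set ℂ := {z : ℂ | 1 < z.re} with hBdef
    set Ω : Set ℂ := A ∪ C ∪ B with hΩdef
    have hΩsub : Ω ⊆ {z : ℂ | 0 < z.re ∧ z ≠ 1} := by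
      rintro z (⟨⟨hz1, hz2⟩ | hzC⟩ | hzB)
      · exact ⟨hz1, fun h => by rw [h] at hz2; simp at hz2⟩
      · have hd : dist z (1 + Complex.I) < 3/4 := hzC
        constructor
        · have : |z.re - (1 + Complex.I).re| ≤ ‖z - (1 + Complex.I)‖ := by
            have := Complex.abs_re_le_norm (z - (1 + Complex.I))
            simpa using this
          rw [Complex.dist_eq] at hd
          simp only [Complex.add_re, Complex.one_re, Complex.I_re] at this
          have h4 := abs_lt.mp (lt_of_le_of_lt this hd)
          linarith [h4.1]
        · intro h
          rw [h] at hd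
          have : dist (1:ℂ) (1 + Complex.I) = 1 := by
            rw [Complex.dist_eq]
            have : (1:ℂ) - (1 + Complex.I) = -Complex.I := by ring
            rw [this]
            simp
          rw [this] at hd
          norm_num at hd
      · have hz' : 1 < z.re := hzB
        refine ⟨by linarith, fun h => by rw [h] at hz'; simp at hz'⟩
    have hApre : IsPreconnected A :=
      ((convex_halfSpace_re_gt (r := 0)).inter (convex_halfSpace_re_lt (r := 1))).isPreconnected
    have hCpre : IsPreconnected C := (convex_ball _ _).isPreconnected
    have hBpre : IsPreconnected B := (convex_halfSpace_re_gt (r := 1)).isPreconnected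
    have hpAC : ((9/10 : ℝ) : ℂ) + Complex.I ∈ A ∩ C := by
      constructor
      · refine ⟨?_, ?_⟩ <;> norm_num [Set.mem_setOf_eq]
      · have : dist (((9/10 : ℝ) : ℂ) + Complex.I) (1 + Complex.I) = 1/10 := by
          rw [Complex.dist_eq]
          have h : (((9/10 : ℝ) : ℂ) + Complex.I) - (1 + Complex.I) = ((-(1/10) : ℝ) : ℂ) := by
            push_cast; ring
          rw [h, Complex.norm_real, Real.norm_eq_abs]
          norm_num
        simp only [hCdef, Metric.mem_ball, this]
        norm_num
    have hpCB : ((6/5 : ℝ) : ℂ) + Complex.I ∈ C ∩ B := by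
      constructor
      · have : dist (((6/5 : ℝ) : ℂ) + Complex.I) (1 + Complex.I) = 1/5 := by
          rw [Complex.dist_eq]
          have h : (((6/5 : ℝ) : ℂ) + Complex.I) - (1 + Complex.I) = ((1/5 : ℝ) : ℂ) := by
            push_cast; ring
          rw [h, Complex.norm_real, Real.norm_eq_abs]
          norm_num
        simp only [hCdef, Metric.mem_ball, this]
        norm_num
      · simp [hBdef]; norm_num
    have hΩpre : IsPreconnected Ω := by
      have h1 : IsPreconnected (A ∪ C) :=
        IsPreconnected.union _ hpAC.1 hpAC.2 hApre hCpre
      apply IsPreconnected.union (((6/5 : ℝ) : ℂ) + Complex.I)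
        (Set.mem_union_right _ hpCB.1) hpCB.2 h1 hBpre
    have hζan : AnalyticOnNhd ℂ riemannZeta Ω := by
      apply DifferentiableOn.analyticOnNhd (s := {z : ℂ | z ≠ 1}) ?_ isOpen_ne |>.mono
      · intro z hz
        exact (hΩsub hz).2
      · intro z hz
        exact (differentiableAt_riemannZeta hz).differentiableWithinAt
    have hgan : AnalyticOnNhd ℂ zetaAux Ω := by
      have hopen : IsOpen {z : ℂ | 0 < z.re ∧ z ≠ 1} := by
        have h1 : IsOpen {z : ℂ | 0 < z.re} := isOpen_lt continuous_const Complex.continuous_re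
        have h2 : IsOpen {z : ℂ | z ≠ 1} := isOpen_ne
        have : {z : ℂ | 0 < z.re ∧ z ≠ 1} = {z : ℂ | 0 < z.re} ∩ {z : ℂ | z ≠ 1} := rfl
        rw [this]
        exact h1.inter h2
      apply DifferentiableOn.analyticOnNhd (s := {z : ℂ | 0 < z.re ∧ z ≠ 1}) ?_ hopen |>.mono hΩsub
      intro z hz
      exact (zetaAux_diffAt hz.1 hz.2).differentiableWithinAt
    have h2mem : (2:ℂ) ∈ Ω := by
      apply Set.mem_union_right
      simp [hBdef]
    have hfg : riemannZeta =ᶠ[nhds (2:ℂ)] zetaAux := by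
      have hmem : {z : ℂ | 1 < z.re} ∈ nhds (2:ℂ) := by
        apply IsOpen.mem_nhds (isOpen_lt continuous_const Complex.continuous_re)
        simp
      filter_upwards [hmem] with z hz
      exact (zetaAux_eq hz).symm
    have hEq := AnalyticOnNhd.eqOn_of_preconnected_of_eventuallyEq hζan hgan hΩpre h2mem hfg
    have hsmem : (s:ℂ) ∈ Ω := by
      apply Set.mem_union_left
      apply Set.mem_union_left
      exact ⟨by simpa using hpos, by simpa using h2⟩
    rw [hEq hsmem]
    exact zetaAux_re_nonpos hpos h2



lemma Cconst_pos {α : ℝ} (hα : 0 < α) (hα2 : α < 2) : 0 < Cconst α := by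
  unfold Cconst
  exact Cconst_pos_aux hα hα2

lemma zetaR_nonpos {s : ℝ} (h1 : -1 < s) (h2 : s < 1) : zetaR s ≤ 0 :=
  zeta_re_nonpos h1 h2

lemma split_K {a b : ℤ} (ha : a ≤ -1) (hb : 1 ≤ b) (f : ℤ → ℝ) :
    ∑ k ∈ (Finset.Icc a b).erase 0, f |k|
      = (∑ k ∈ Finset.Icc 1 (-a), f k) + ∑ k ∈ Finset.Icc 1 b, f k := by
  have hsplit : (Finset.Icc a b).erase 0 = Finset.Icc a (-1) ∪ Finset.Icc 1 b := by
    ext k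
    simp only [Finset.mem_erase, Finset.mem_Icc, Finset.mem_union]
    omega
  have hdisj : Disjoint (Finset.Icc a (-1)) (Finset.Icc 1 b) := by
    rw [Finset.disjoint_left]
    intro k hk1 hk2
    simp only [Finset.mem_Icc] at hk1 hk2
    omega
  rw [hsplit, Finset.sum_union hdisj]
  congr 1
  · refine Finset.sum_nbij' (i := fun k => -k) (j := fun k => -k) ?_ ?_ ?_ ?_ ?_
    · intro k hk; simp only [Finset.mem_Icc] at *; omega
    · intro k hk; simp only [Finset.mem_Icc] at *; omega
    · intro k _; ring
    · intro k _; ring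
    · intro k hk
      simp only [Finset.mem_Icc] at hk
      have : |k| = -k := abs_of_neg (by omega)
      rw [this]
  · refine Finset.sum_congr rfl fun k hk => ?_
    simp only [Finset.mem_Icc] at hk
    rw [abs_of_pos (by omega)]


end Helpers

/-- Maximum-norm stability of the explicit Euler scheme for the absorbing condition. -/
theorem stmt_10 (α ε h Δt : ℝ) (J : ℤ)
    (hα : 0 < α) (hα2 : α < 2) (hε : 0 < ε) (hJ : 1 ≤ J)
    (hh : h = 1 / (J : ℝ)) (hΔt : 0 < Δt)
    (P : ℕ → ℤ → ℝ)
    (hbc : ∀ n : ℕ, ∀ j : ℤ, J ≤ |j| → P n j = 0)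
    (hscheme : ∀ n : ℕ, ∀ j : ℤ, |j| < J →
      P (n + 1) j =
        P n j
          - Δt * ε * Cconst α * zetaR (α - 1) * h ^ (-α) *
              (P n (j - 1) - 2 * P n j + P n (j + 1))
          - Δt * ε * Cconst α / α *
              ((1 + (j : ℝ) * h) ^ (-α) + (1 - (j : ℝ) * h) ^ (-α)) * P n j
          + Δt * ε * Cconst α * h *
              dsum (-J - j) (J - j)
                (fun k => (P n (j + k) - P n j) / |(k : ℝ) * h| ^ (1 + α)))
    (hCFL : Δt / h ^ α ≤ 1 / (2 * ε * Cconst α * (1 + 1 / α - zetaR (α - 1)))) :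
    ∀ n : ℕ, (⨆ j : ℤ, |P (n + 1) j|) ≤ ⨆ j : ℤ, |P n j| := by
  have hC : 0 < Cconst α := Cconst_pos hα hα2
  have hz : zetaR (α - 1) ≤ 0 := zetaR_nonpos (by linarith) (by linarith)
  have hJR : (0:ℝ) < (J:ℝ) := by exact_mod_cast lt_of_lt_of_le one_pos hJ
  have hh0 : 0 < h := by rw [hh]; positivity
  intro n
  -- boundedness of sup
  set B : ℝ := ∑ i ∈ Finset.Icc (-J) J, |P n i| with hBdef
  have hB : ∀ i : ℤ, |P n i| ≤ B := by
    intro i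
    by_cases hi : i ∈ Finset.Icc (-J) J
    · exact Finset.single_le_sum (f := fun i => |P n i|) (fun a _ => abs_nonneg _) hi
    · have hJi : J ≤ |i| := by
        by_contra hcon
        push_neg at hcon
        rw [abs_lt] at hcon
        exact hi (Finset.mem_Icc.mpr ⟨by omega, by omega⟩)
      rw [hbc n i hJi, abs_zero]
      exact Finset.sum_nonneg fun a _ => abs_nonneg _
  have hbdd : BddAbove (Set.range fun i : ℤ => |P n i|) := ⟨B, by rintro x ⟨i, rfl⟩; exact hB i⟩
  set M : ℝ := ⨆ i : ℤ, |P n i| with hMdef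
  have hM : ∀ i : ℤ, |P n i| ≤ M := fun i => le_ciSup hbdd i
  have hM0 : 0 ≤ M := le_trans (abs_nonneg _) (hM 0)
  apply ciSup_le
  intro j
  by_cases hjJ : |j| < J
  swap
  · rw [hbc (n + 1) j (le_of_not_gt hjJ), abs_zero]
    exact hM0
  obtain ⟨hj1, hj2⟩ := abs_lt.mp hjJ
  have hLpos : (1:ℤ) ≤ J - j := by omega
  have hMpos : (1:ℤ) ≤ J + j := by omega
  rw [hscheme n j hjJ]
  set c : ℝ := Δt * ε * Cconst α with hc
  have hc0 : 0 < c := by rw [hc]; positivity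
  set K : Finset ℤ := (Finset.Icc (-J - j) (J - j)).erase 0 with hK
  set q : ℤ → ℝ :=
    fun k => c * h * (if k = -J - j ∨ k = J - j then (1:ℝ)/2 else 1) / |(k:ℝ) * h| ^ (1 + α)
    with hq
  have hq0 : ∀ k ∈ K, 0 ≤ q k := by
    intro k _
    rw [hq]
    apply div_nonneg
    · split_ifs <;> positivity
    · exact Real.rpow_nonneg (abs_nonneg _) _
  set S : ℝ := ∑ k ∈ K, q k with hS
  have hS0 : 0 ≤ S := Finset.sum_nonneg hq0
  have hdsum : c * h * dsum (-J - j) (J - j)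
      (fun k => (P n (j + k) - P n j) / |(k : ℝ) * h| ^ (1 + α))
      = (∑ k ∈ K, q k * P n (j + k)) - S * P n j := by
    rw [hS, Finset.sum_mul, dsum, Finset.mul_sum, ← Finset.sum_sub_distrib]
    refine Finset.sum_congr rfl fun k hk => ?_
    rw [hq]
    ring
  rw [hdsum]
  set b' : ℝ := c * (-(zetaR (α - 1))) * h ^ (-α) with hb'
  have hb'0 : 0 ≤ b' := by
    rw [hb']
    have : 0 ≤ -(zetaR (α - 1)) := by linarith
    positivity
  set d : ℝ := c / α * ((1 + (j:ℝ) * h) ^ (-α) + (1 - (j:ℝ) * h) ^ (-α)) with hd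
  -- base positivity for d
  have hjh1 : 1 + (j:ℝ) * h = ((J + j : ℤ):ℝ) * h := by
    rw [hh]
    push_cast
    field_simp
  have hjh2 : 1 - (j:ℝ) * h = ((J - j : ℤ):ℝ) * h := by
    rw [hh]
    push_cast
    field_simp
  have hd0 : 0 ≤ d := by
    rw [hd, hjh1, hjh2]
    have h1 : (0:ℝ) < ((J + j : ℤ):ℝ) := by exact_mod_cast hMpos
    have h2 : (0:ℝ) < ((J - j : ℤ):ℝ) := by exact_mod_cast hLpos
    positivity
  -- the representation
  have hrep : P n j - c * zetaR (α - 1) * h ^ (-α) * (P n (j - 1) - 2 * P n j + P n (j + 1))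
      - c / α * ((1 + (j:ℝ) * h) ^ (-α) + (1 - (j:ℝ) * h) ^ (-α)) * P n j
      + ((∑ k ∈ K, q k * P n (j + k)) - S * P n j)
      = (1 - 2*b' - d - S) * P n j + b' * P n (j - 1) + b' * P n (j + 1)
        + ∑ k ∈ K, q k * P n (j + k) := by
    rw [hb', hd]
    ring
  rw [hrep]
  -- main estimate : 2 b' + d + S ≤ 1
  have hmain : 2*b' + d + S ≤ 1 := by
    set f : ℤ → ℝ := fun m => ((m:ℝ)) ^ (-(1 + α)) with hf
    have hqle : ∀ k ∈ K, q k ≤ c * h ^ (-α) * f |k| := by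
      intro k hk
      have hkne : k ≠ 0 := Finset.ne_of_mem_erase hk
      have hkR : ((k:ℝ)) ≠ 0 := Int.cast_ne_zero.mpr hkne
      have habs : (0:ℝ) < |(k:ℝ)| := abs_pos.mpr hkR
      have h1 : |(k:ℝ) * h| = |(k:ℝ)| * h := by
        rw [abs_mul, abs_of_pos hh0]
      have h2 : (|(k:ℝ)| * h) ^ (1 + α) = |(k:ℝ)| ^ (1 + α) * h ^ (1 + α) :=
        Real.mul_rpow (abs_nonneg _) hh0.le
      have hden : (0:ℝ) < |(k:ℝ)| ^ (1 + α) * h ^ (1 + α) := by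
        have := Real.rpow_pos_of_pos habs (1 + α)
        have := Real.rpow_pos_of_pos hh0 (1 + α)
        positivity
      have hwle : (if k = -J - j ∨ k = J - j then (1:ℝ)/2 else 1) ≤ 1 := by
        split_ifs <;> norm_num
      have hwpos : (0:ℝ) ≤ (if k = -J - j ∨ k = J - j then (1:ℝ)/2 else 1) := by
        split_ifs <;> norm_num
      have hden' : (0:ℝ) < |(k:ℝ) * h| ^ (1 + α) := by
        rw [h1, h2]; exact hden
      have key : c * h ^ (-α) * |(k:ℝ)| ^ (-(1+α)) * (|(k:ℝ)| ^ (1+α) * h ^ (1+α)) = c * h := by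
        rw [show c * h ^ (-α) * |(k:ℝ)| ^ (-(1+α)) * (|(k:ℝ)| ^ (1+α) * h ^ (1+α))
            = c * (h ^ (-α) * h ^ (1+α)) * (|(k:ℝ)| ^ (-(1+α)) * |(k:ℝ)| ^ (1+α)) from by ring]
        rw [← Real.rpow_add hh0, ← Real.rpow_add habs,
          show -α + (1 + α) = (1:ℝ) from by ring, show -(1 + α) + (1 + α) = (0:ℝ) from by ring,
          Real.rpow_one, Real.rpow_zero, mul_one]
      have hcast : ((|k| : ℤ):ℝ) = |(k:ℝ)| := by push_cast; ring
      simp only [hq, hf, hcast]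
      rw [h1, h2, div_le_iff₀ hden]
      calc c * h * (if k = -J - j ∨ k = J - j then (1:ℝ)/2 else 1) ≤ c * h * 1 := by
            have : (0:ℝ) ≤ c * h := by positivity
            exact mul_le_mul_of_nonneg_left hwle this
        _ = c * h := by ring
        _ = c * h ^ (-α) * |(k:ℝ)| ^ (-(1+α)) * (|(k:ℝ)| ^ (1+α) * h ^ (1+α)) := key.symm
        _ = c * h ^ (-α) * |(k:ℝ)| ^ (-(1+α)) * (|(k:ℝ)| ^ (1+α) * h ^ (1+α)) := rfl
    -- split the sum
    have hsplit : ∑ k ∈ K, f |k|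
        = (∑ k ∈ Finset.Icc (1:ℤ) (J + j), f k) + ∑ k ∈ Finset.Icc (1:ℤ) (J - j), f k := by
      have hsp := split_K (a := -J - j) (b := J - j) (by omega) (by omega) f
      rw [show -(-J - j) = J + j from by ring] at hsp
      rw [hK, hsp]
    have hSle : S ≤ c * h ^ (-α) * ((∑ k ∈ Finset.Icc (1:ℤ) (J + j), f k)
        + ∑ k ∈ Finset.Icc (1:ℤ) (J - j), f k) := by
      rw [hS]
      calc ∑ k ∈ K, q k ≤ ∑ k ∈ K, c * h ^ (-α) * f |k| := Finset.sum_le_sum hqle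
        _ = c * h ^ (-α) * ∑ k ∈ K, f |k| := by rw [Finset.mul_sum]
        _ = _ := by rw [hsplit]
    -- d in grid form
    have hdeq : d = c / α * (((J + j : ℤ):ℝ) ^ (-α) * h ^ (-α)
        + ((J - j : ℤ):ℝ) ^ (-α) * h ^ (-α)) := by
      have h1 : (0:ℝ) ≤ ((J + j : ℤ):ℝ) := by
        have : (0:ℤ) ≤ J + j := by omega
        exact_mod_cast this
      have h2 : (0:ℝ) ≤ ((J - j : ℤ):ℝ) := by
        have : (0:ℤ) ≤ J - j := by omega
        exact_mod_cast this
      rw [hd, hjh1, hjh2, Real.mul_rpow h1 hh0.le, Real.mul_rpow h2 hh0.le]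
    -- sum bounds
    have hT1 := sum_bound hα hα2 (J + j) hMpos
    have hT2 := sum_bound hα hα2 (J - j) hLpos
    -- b' in terms
    have hb'eq : 2*b' = c * h ^ (-α) * (2 * (-(zetaR (α - 1)))) := by rw [hb']; ring
    -- CFL consequence
    have hzpos : 0 < 1 + 1/α - zetaR (α - 1) := by
      have : 0 < 1/α := by positivity
      linarith
    have hCFL' : Δt * (2 * ε * Cconst α * (1 + 1/α - zetaR (α - 1))) ≤ h ^ α := by
      have hhα : 0 < h ^ α := Real.rpow_pos_of_pos hh0 α
      have hden2 : 0 < 2 * ε * Cconst α * (1 + 1/α - zetaR (α - 1)) := by positivity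
      rw [div_le_div_iff₀ hhα hden2] at hCFL
      linarith
    have hhinv : h ^ α * h ^ (-α) = 1 := by
      rw [← Real.rpow_add hh0, show α + -α = (0:ℝ) from by ring, Real.rpow_zero]
    have hcfl2 : 2 * c * h ^ (-α) * (1 + 1/α - zetaR (α - 1)) ≤ 1 := by
      have hstep : Δt * (2 * ε * Cconst α * (1 + 1/α - zetaR (α - 1))) * h ^ (-α)
          ≤ h ^ α * h ^ (-α) :=
        mul_le_mul_of_nonneg_right hCFL' (Real.rpow_nonneg hh0.le _)
      rw [hhinv] at hstep
      calc 2 * c * h ^ (-α) * (1 + 1/α - zetaR (α - 1))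
          = Δt * (2 * ε * Cconst α * (1 + 1/α - zetaR (α - 1))) * h ^ (-α) := by
            rw [hc]; ring
        _ ≤ 1 := hstep
    -- assemble
    have hhnn : (0:ℝ) ≤ h ^ (-α) := Real.rpow_nonneg hh0.le _
    have keydiv : ∀ T g : ℝ, α * T + g ≤ α + 1 → T + (1/α) * g ≤ 1 + 1/α := by
      intro T g hTg
      have h1 : T + (1/α) * g = (1/α) * (α * T + g) := by field_simp
      have h2 : 1 + 1/α = (1/α) * (α + 1) := by field_simp
      rw [h1, h2]
      exact mul_le_mul_of_nonneg_left hTg (by positivity)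
    have hT1' : (∑ k ∈ Finset.Icc (1:ℤ) (J + j), f k) + (1/α) * ((J + j : ℤ):ℝ) ^ (-α)
        ≤ 1 + 1/α := by
      simp only [hf]
      exact keydiv _ _ hT1
    have hT2' : (∑ k ∈ Finset.Icc (1:ℤ) (J - j), f k) + (1/α) * ((J - j : ℤ):ℝ) ^ (-α)
        ≤ 1 + 1/α := by
      simp only [hf]
      exact keydiv _ _ hT2
    have hcA : (0:ℝ) ≤ c * h ^ (-α) := by positivity
    have hsum2 : 2*(-(zetaR (α - 1)))
        + ((∑ k ∈ Finset.Icc (1:ℤ) (J + j), f k) + (1/α) * ((J + j : ℤ):ℝ) ^ (-α))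
        + ((∑ k ∈ Finset.Icc (1:ℤ) (J - j), f k) + (1/α) * ((J - j : ℤ):ℝ) ^ (-α))
        ≤ 2*(-(zetaR (α - 1))) + (1 + 1/α) + (1 + 1/α) := by linarith
    calc 2*b' + d + S
        ≤ c * h ^ (-α) * (2*(-(zetaR (α - 1))))
          + c / α * (((J + j : ℤ):ℝ) ^ (-α) * h ^ (-α) + ((J - j : ℤ):ℝ) ^ (-α) * h ^ (-α))
          + c * h ^ (-α) * ((∑ k ∈ Finset.Icc (1:ℤ) (J + j), f k)
            + ∑ k ∈ Finset.Icc (1:ℤ) (J - j), f k) := by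
          linarith [hSle, hb'eq.le, hb'eq.ge, hdeq.le, hdeq.ge]
      _ = c * h ^ (-α) * (2*(-(zetaR (α - 1)))
          + ((∑ k ∈ Finset.Icc (1:ℤ) (J + j), f k) + (1/α) * ((J + j : ℤ):ℝ) ^ (-α))
          + ((∑ k ∈ Finset.Icc (1:ℤ) (J - j), f k) + (1/α) * ((J - j : ℤ):ℝ) ^ (-α))) := by
          field_simp
          ring
      _ ≤ c * h ^ (-α) * (2*(-(zetaR (α - 1))) + (1 + 1/α) + (1 + 1/α)) :=
          mul_le_mul_of_nonneg_left hsum2 hcA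
      _ = 2 * c * h ^ (-α) * (1 + 1/α - zetaR (α - 1)) := by ring
      _ ≤ 1 := hcfl2
  -- conclusion
  have ha0 : 0 ≤ 1 - 2*b' - d - S := by linarith
  have h2a : |(1 - 2*b' - d - S) * P n j| ≤ (1 - 2*b' - d - S) * M := by
    rw [abs_mul, abs_of_nonneg ha0]
    exact mul_le_mul_of_nonneg_left (hM _) ha0
  have h3a : |b' * P n (j - 1)| ≤ b' * M := by
    rw [abs_mul, abs_of_nonneg hb'0]
    exact mul_le_mul_of_nonneg_left (hM _) hb'0
  have h4a : |b' * P n (j + 1)| ≤ b' * M := by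
    rw [abs_mul, abs_of_nonneg hb'0]
    exact mul_le_mul_of_nonneg_left (hM _) hb'0
  have h1a : |∑ k ∈ K, q k * P n (j + k)| ≤ S * M := by
    calc |∑ k ∈ K, q k * P n (j + k)| ≤ ∑ k ∈ K, |q k * P n (j + k)| :=
          Finset.abs_sum_le_sum_abs _ _
      _ ≤ ∑ k ∈ K, q k * M := by
          apply Finset.sum_le_sum
          intro k hk
          rw [abs_mul, abs_of_nonneg (hq0 k hk)]
          exact mul_le_mul_of_nonneg_left (hM _) (hq0 k hk)
      _ = S * M := by rw [hS, Finset.sum_mul]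
  have htri : |(1 - 2*b' - d - S) * P n j + b' * P n (j - 1) + b' * P n (j + 1)
      + ∑ k ∈ K, q k * P n (j + k)|
      ≤ |(1 - 2*b' - d - S) * P n j| + |b' * P n (j - 1)| + |b' * P n (j + 1)|
        + |∑ k ∈ K, q k * P n (j + k)| := by
    have t1 := abs_add_le ((1 - 2*b' - d - S) * P n j + b' * P n (j - 1) + b' * P n (j + 1))
      (∑ k ∈ K, q k * P n (j + k))
    have t2 := abs_add_le ((1 - 2*b' - d - S) * P n j + b' * P n (j - 1)) (b' * P n (j + 1))
    have t3 := abs_add_le ((1 - 2*b' - d - S) * P n j) (b' * P n (j - 1))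
    linarith
  have hfin : (1 - 2*b' - d - S) * M + b' * M + b' * M + S * M ≤ M := by
    have he : (1 - 2*b' - d - S) * M + b' * M + b' * M + S * M = (1 - d) * M := by ring
    have hle : (1 - d) * M ≤ 1 * M := mul_le_mul_of_nonneg_right (by linarith) hM0
    rw [he]
    linarith
  linarith
end
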